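/- Let X be a real random variable whose density p is unimodal with mode μ, in the sense that p is nondecreasing on (-∞, μ] and nonincreasing on [μ, ∞). For the silence interval S = [μ−k, μ+k] with k > 0 and P(X ∈ S) > 0, the conditional variance satisfies E[(X−μ)² | X ∈ S] ≤ k²/3. -/
import Mathlib


open MeasureTheory Set

lemma sq_div_sqrt3 (k : ℝ) : (k / Real.sqrt 3) ^ 2 = k ^ 2 / 3 := by
  rw [div_pow, Real.sq_sqrt (by norm_num : (3:ℝ) ≥ 0)]

lemma integral_g_right (μ k : ℝ) :
    ∫ x in μ..(μ + k), ((x - μ) ^ 2 - k ^ 2 / 3) = 0 := by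
  have h1 : ∫ x in μ..(μ + k), ((x - μ) ^ 2 - k ^ 2 / 3)
      = (∫ x in μ..(μ + k), (x - μ) ^ 2) - ∫ x in μ..(μ + k), (k ^ 2 / 3 : ℝ) := by
    apply intervalIntegral.integral_sub
    · exact ((continuous_id.sub continuous_const).pow 2).intervalIntegrable _ _
    · exact intervalIntegrable_const
  have h2 : (∫ x in μ..(μ + k), (x - μ) ^ 2) = ∫ x in (0:ℝ)..k, x ^ 2 := by
    have := intervalIntegral.integral_comp_sub_right (a := μ) (b := μ + k)
      (fun x => x ^ 2) μ
    simpa using this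
  rw [h1, h2, integral_pow, intervalIntegral.integral_const]
  simp [smul_eq_mul]; ring

lemma integral_g_left (μ k : ℝ) :
    ∫ x in (μ - k)..μ, ((x - μ) ^ 2 - k ^ 2 / 3) = 0 := by
  have h1 : ∫ x in (μ - k)..μ, ((x - μ) ^ 2 - k ^ 2 / 3)
      = (∫ x in (μ - k)..μ, (x - μ) ^ 2) - ∫ x in (μ - k)..μ, (k ^ 2 / 3 : ℝ) := by
    apply intervalIntegral.integral_sub
    · exact ((continuous_id.sub continuous_const).pow 2).intervalIntegrable _ _
    · exact intervalIntegrable_const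
  have h2 : (∫ x in (μ - k)..μ, (x - μ) ^ 2) = ∫ x in (-k)..(0:ℝ), x ^ 2 := by
    have := intervalIntegral.integral_comp_sub_right (a := μ - k) (b := μ)
      (fun x => x ^ 2) μ
    simpa using this
  rw [h1, h2, integral_pow, intervalIntegral.integral_const]
  simp [smul_eq_mul]; ring

theorem conditional_variance_le_of_unimodal
    (p : ℝ → ℝ) (μ k : ℝ) (hk : 0 < k)
    (hp : ∀ x, 0 ≤ p x)
    (hmono : MonotoneOn p (Set.Iic μ))
    (hanti : AntitoneOn p (Set.Ici μ))
    (hint : IntegrableOn p (Set.Icc (μ - k) (μ + k)))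
    (hint2 : IntegrableOn (fun x => (x - μ) ^ 2 * p x) (Set.Icc (μ - k) (μ + k)))
    (hpos : 0 < ∫ x in Set.Icc (μ - k) (μ + k), p x) :
    (∫ x in Set.Icc (μ - k) (μ + k), (x - μ) ^ 2 * p x) /
      (∫ x in Set.Icc (μ - k) (μ + k), p x) ≤ k ^ 2 / 3 := by
  rw [div_le_iff₀ hpos]
  rw [← sub_nonpos]
  set g : ℝ → ℝ := fun x => (x - μ) ^ 2 - k ^ 2 / 3 with hg
  have hsqrt3 : (0:ℝ) < Real.sqrt 3 := Real.sqrt_pos.mpr (by norm_num)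
  have hc : 0 ≤ k / Real.sqrt 3 := le_of_lt (div_pos hk hsqrt3)
  -- integrability of g * p on Icc
  have hintg : IntegrableOn (fun x => g x * p x) (Set.Icc (μ - k) (μ + k)) := by
    have : (fun x => g x * p x) = fun x => (x - μ) ^ 2 * p x - (k ^ 2 / 3) * p x := by
      funext x; simp [hg]; ring
    rw [this]
    exact hint2.sub (hint.const_mul _)
  -- split key inequality
  have hsub1 : Set.Icc (μ - k) μ ⊆ Set.Icc (μ - k) (μ + k) :=
    Set.Icc_subset_Icc le_rfl (by linarith)
  have hsub2 : Set.Ioc μ (μ + k) ⊆ Set.Icc (μ - k) (μ + k) := fun x hx =>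
    ⟨by linarith [hx.1], hx.2⟩
  have key : ∫ x in Set.Icc (μ - k) (μ + k), g x * p x ≤ 0 := by
    have hsplit : ∫ x in Set.Icc (μ - k) (μ + k), g x * p x
        = (∫ x in Set.Icc (μ - k) μ, g x * p x) + ∫ x in Set.Ioc μ (μ + k), g x * p x := by
      rw [← setIntegral_union]
      · rw [Set.Icc_union_Ioc_eq_Icc (by linarith) (by linarith)]
      · exact Set.disjoint_left.mpr (fun x hx hx' => absurd hx.2 (not_le.mpr hx'.1))
      · exact measurableSet_Ioc
      · exact hintg.mono_set hsub1
      · exact hintg.mono_set hsub2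
    rw [hsplit]
    -- right half
    have hright : ∫ x in Set.Ioc μ (μ + k), g x * p x ≤ 0 := by
      obtain ⟨c, hcdef⟩ : ∃ c, c = μ + k / Real.sqrt 3 := ⟨_, rfl⟩
      have hcI : c ∈ Set.Ici μ := by simp [hcdef]; linarith
      have hcm : (c - μ) ^ 2 = k ^ 2 / 3 := by
        have h' : c - μ = k / Real.sqrt 3 := by rw [hcdef]; ring
        rw [h', sq_div_sqrt3]
      have hbound : ∀ x ∈ Set.Ioc μ (μ + k), g x * p x ≤ g x * p c := by
        intro x hx
        rcases le_total x c with h | h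
        · have h2 : (x - μ) ^ 2 ≤ (c - μ) ^ 2 :=
            pow_le_pow_left₀ (by linarith [hx.1]) (by linarith) 2
          have hgx : g x ≤ 0 := by simp only [hg]; linarith
          have hpc : p c ≤ p x := hanti (le_of_lt hx.1) hcI h
          nlinarith
        · have hcμ : (0:ℝ) ≤ c - μ := by rw [hcdef]; linarith
          have h2 : (c - μ) ^ 2 ≤ (x - μ) ^ 2 :=
            pow_le_pow_left₀ hcμ (by linarith) 2
          have hgx : 0 ≤ g x := by simp only [hg]; linarith
          have hpc : p x ≤ p c := hanti hcI (le_of_lt hx.1) h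
          nlinarith
      have hmono' : ∫ x in Set.Ioc μ (μ + k), g x * p x
          ≤ ∫ x in Set.Ioc μ (μ + k), g x * p c := by
        apply setIntegral_mono_on (hintg.mono_set hsub2)
        · have : Continuous fun x : ℝ => g x * p c := by
            simp only [hg]
            exact (((continuous_id.sub continuous_const).pow 2).sub continuous_const).mul
              continuous_const
          exact this.integrableOn_Ioc
        · exact measurableSet_Ioc
        · exact hbound
      have hzero : ∫ x in Set.Ioc μ (μ + k), g x * p c = 0 := by
        rw [integral_mul_const]
        have : ∫ x in Set.Ioc μ (μ + k), g x = ∫ x in μ..(μ + k), g x := by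
          rw [intervalIntegral.integral_of_le (by linarith)]
        rw [this, integral_g_right μ k, zero_mul]
      linarith
    -- left half
    have hleft : ∫ x in Set.Icc (μ - k) μ, g x * p x ≤ 0 := by
      obtain ⟨c, hcdef⟩ : ∃ c, c = μ - k / Real.sqrt 3 := ⟨_, rfl⟩
      have hcI : c ∈ Set.Iic μ := by simp [hcdef]; linarith
      have hcm : (μ - c) ^ 2 = k ^ 2 / 3 := by
        have h' : μ - c = k / Real.sqrt 3 := by rw [hcdef]; ring
        rw [h', sq_div_sqrt3]
      have hbound : ∀ x ∈ Set.Icc (μ - k) μ, g x * p x ≤ g x * p c := by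
        intro x hx
        rcases le_total x c with h | h
        · have hcμ : (0:ℝ) ≤ μ - c := by rw [hcdef]; linarith
          have h2 : (μ - c) ^ 2 ≤ (μ - x) ^ 2 :=
            pow_le_pow_left₀ hcμ (by linarith) 2
          have hgx : 0 ≤ g x := by simp only [hg]; nlinarith
          have hpc : p x ≤ p c := hmono hx.2 hcI h
          nlinarith
        · have hcμ : (0:ℝ) ≤ μ - c := by rw [hcdef]; linarith
          have h2 : (μ - x) ^ 2 ≤ (μ - c) ^ 2 :=
            pow_le_pow_left₀ (by linarith [hx.2]) (by linarith) 2
          have hgx : g x ≤ 0 := by simp only [hg]; nlinarith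
          have hpc : p c ≤ p x := hmono hcI hx.2 h
          nlinarith
      have hmono' : ∫ x in Set.Icc (μ - k) μ, g x * p x
          ≤ ∫ x in Set.Icc (μ - k) μ, g x * p c := by
        apply setIntegral_mono_on (hintg.mono_set hsub1)
        · have : Continuous fun x : ℝ => g x * p c := by
            simp only [hg]
            exact (((continuous_id.sub continuous_const).pow 2).sub continuous_const).mul
              continuous_const
          exact this.integrableOn_Icc
        · exact measurableSet_Icc
        · exact hbound
      have hzero : ∫ x in Set.Icc (μ - k) μ, g x * p c = 0 := by
        rw [integral_mul_const]
        have : ∫ x in Set.Icc (μ - k) μ, g x = ∫ x in (μ - k)..μ, g x := by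
          rw [intervalIntegral.integral_of_le (by linarith), integral_Icc_eq_integral_Ioc]
        rw [this, integral_g_left μ k, zero_mul]
      linarith
    linarith
  have hrw : (∫ x in Set.Icc (μ - k) (μ + k), (x - μ) ^ 2 * p x)
      - k ^ 2 / 3 * ∫ x in Set.Icc (μ - k) (μ + k), p x
      = ∫ x in Set.Icc (μ - k) (μ + k), g x * p x := by
    rw [← integral_const_mul, ← integral_sub hint2 ((hint.const_mul _))]
    congr 1; funext x; simp [hg]; ring
  linarith [hrw ▸ key]
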